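/- Let 0 < q < 1. Then ∫₀^∞ A_q(u^{−1})² · w_SW(u; q) du = (q;q)_∞, where the integral is over u ∈ (0, ∞). -/

import Mathlib

/-- The finite q-Pochhammer symbol `(a;q)_n = ∏_{j=0}^{n-1} (1 - a q^j)` in `ℝ`. -/
noncomputable def qPochR (q a : ℝ) (n : ℕ) : ℝ :=
  ∏ j ∈ Finset.range n, (1 - a * q ^ j)

/-- The infinite q-Pochhammer symbol `(a;q)_∞ = ∏_{j=0}^{∞} (1 - a q^j)` in `ℝ`. -/
noncomputable def qPochInfR (q a : ℝ) : ℝ :=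
  ∏' j : ℕ, (1 - a * q ^ j)

/-- The Stieltjes–Wigert weight
`w_SW(x;q) = √(−1/(2π log q)) · exp{(1/(2 log q))(log(x/√q))²}`. -/
noncomputable def wSW (q x : ℝ) : ℝ :=
  Real.sqrt (-1 / (2 * Real.pi * Real.log q)) *
    Real.exp (1 / (2 * Real.log q) * Real.log (x / Real.sqrt q) ^ 2)

/-- The Ramanujan function restricted to real arguments:
`A_q(x) = Σ_{k=0}^∞ q^{k²} (−x)^k / (q;q)_k`. -/
noncomputable def ramanujanAqR (q x : ℝ) : ℝ :=
  ∑' k : ℕ, q ^ (k ^ 2) * (-x) ^ k / qPochR q q k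

open Real Filter Set MeasureTheory Finset Topology

open Real Filter Set MeasureTheory Finset Topology

section A
variable {q : ℝ}

lemma factor_pos (hq0 : 0 < q) (hq1 : q < 1) (j : ℕ) : 0 < 1 - q * q ^ j := by
  have h1 : q ^ j ≤ 1 := pow_le_one₀ hq0.le hq1.le
  nlinarith [pow_pos hq0 j]

lemma factor_le_one (hq0 : 0 < q) (j : ℕ) : 1 - q * q ^ j ≤ 1 := by
  nlinarith [pow_pos hq0 j]

lemma qPochR_q_pos (hq0 : 0 < q) (hq1 : q < 1) (n : ℕ) : 0 < qPochR q q n :=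
  Finset.prod_pos fun j _ => factor_pos hq0 hq1 j

lemma qPochR_q_le_one (hq0 : 0 < q) (hq1 : q < 1) (n : ℕ) : qPochR q q n ≤ 1 :=
  Finset.prod_le_one (fun j _ => (factor_pos hq0 hq1 j).le) (fun j _ => factor_le_one hq0 j)

lemma summable_logPoch (hq0 : 0 < q) (hq1 : q < 1) :
    Summable (fun j : ℕ => Real.log (1 - q * q ^ j)) := by
  have hb : ∀ j : ℕ, ‖Real.log (1 - q * q ^ j)‖ ≤ (q / (1 - q)) * q ^ j := by
    intro j
    have h0 := factor_pos hq0 hq1 j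
    have hle : Real.log (1 - q * q ^ j) ≤ 0 :=
      Real.log_nonpos (by linarith) (factor_le_one hq0 j)
    rw [Real.norm_eq_abs, abs_of_nonpos hle]
    have h2 : Real.log (1 - q * q ^ j)⁻¹ ≤ (1 - q * q ^ j)⁻¹ - 1 :=
      Real.log_le_sub_one_of_pos (by positivity)
    rw [Real.log_inv] at h2
    have hqj : q * q ^ j ≤ q := by nlinarith [pow_le_one₀ hq0.le hq1.le (n := j), pow_pos hq0 j]
    have h3 : (1 - q * q ^ j)⁻¹ - 1 = (q * q ^ j) / (1 - q * q ^ j) := by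
      field_simp
      ring
    have h4 : (q * q ^ j) / (1 - q * q ^ j) ≤ (q * q ^ j) / (1 - q) := by
      apply div_le_div_of_nonneg_left (by positivity) (by linarith) (by linarith)
    calc -Real.log (1 - q * q ^ j) ≤ (1 - q * q ^ j)⁻¹ - 1 := by linarith
      _ ≤ (q * q ^ j) / (1 - q) := by rw [h3]; exact h4
      _ = (q / (1 - q)) * q ^ j := by ring
  exact Summable.of_norm_bounded ((summable_geometric_of_lt_one hq0.le hq1).mul_left _) hb

lemma qPochInf_eq_exp (hq0 : 0 < q) (hq1 : q < 1) :
    qPochInfR q q = Real.exp (∑' j : ℕ, Real.log (1 - q * q ^ j)) := by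
  have h := (summable_logPoch hq0 hq1).hasSum.rexp
  have hfun : (Real.exp ∘ fun j : ℕ => Real.log (1 - q * q ^ j)) = fun j : ℕ => 1 - q * q ^ j :=
    funext fun j => Real.exp_log (factor_pos hq0 hq1 j)
  rw [hfun] at h
  rw [qPochInfR]
  exact h.tprod_eq

lemma qPochInf_q_pos (hq0 : 0 < q) (hq1 : q < 1) : 0 < qPochInfR q q := by
  rw [qPochInf_eq_exp hq0 hq1]; exact Real.exp_pos _

lemma qPochR_eq_exp (hq0 : 0 < q) (hq1 : q < 1) (n : ℕ) :
    qPochR q q n = Real.exp (∑ j ∈ Finset.range n, Real.log (1 - q * q ^ j)) := by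
  rw [Real.exp_sum]
  exact Finset.prod_congr rfl fun j _ => (Real.exp_log (factor_pos hq0 hq1 j)).symm

lemma qPochInf_le_qPochR (hq0 : 0 < q) (hq1 : q < 1) (n : ℕ) :
    qPochInfR q q ≤ qPochR q q n := by
  rw [qPochInf_eq_exp hq0 hq1, qPochR_eq_exp hq0 hq1 n]
  apply Real.exp_le_exp.2
  have h := Summable.sum_add_tsum_nat_add (f := fun j : ℕ => Real.log (1 - q * q ^ j)) n
    (summable_logPoch hq0 hq1)
  have htail : (∑' j : ℕ, Real.log (1 - q * q ^ (j + n))) ≤ 0 := by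
    apply tsum_nonpos
    intro j
    exact Real.log_nonpos (by linarith [factor_pos hq0 hq1 (j + n)]) (factor_le_one hq0 _)
  linarith [h]

lemma tendsto_qPochR (hq0 : 0 < q) (hq1 : q < 1) :
    Tendsto (fun n => qPochR q q n) atTop (𝓝 (qPochInfR q q)) := by
  have h := (summable_logPoch hq0 hq1).hasSum.tendsto_sum_nat
  have h2 := (Real.continuous_exp.continuousAt (x := ∑' j : ℕ, Real.log (1 - q * q ^ j))).tendsto.comp h
  rw [qPochInf_eq_exp hq0 hq1]
  refine h2.congr fun n => ?_
  exact (qPochR_eq_exp hq0 hq1 n).symm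

-- triangular number helper
lemma tri_succ (k : ℕ) : (k + 1) * k / 2 = k * (k - 1) / 2 + k := by
  cases k with
  | zero => simp
  | succ n =>
    have h : (n + 1) * n + 2 * (n + 1) = (n + 2) * (n + 1) := by ring
    calc (n + 1 + 1) * (n + 1) / 2 = ((n + 1) * n + 2 * (n + 1)) / 2 := by
          congr 1; rw [← h]
      _ = (n + 1) * n / 2 + (n + 1) := by
          rw [Nat.add_mul_div_left _ _ (by norm_num : 0 < 2)]
      _ = (n + 1) * (n + 1 - 1) / 2 + (n + 1) := by simp

lemma summable_master (hq0 : 0 < q) (hq1 : q < 1) (x : ℝ) :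
    Summable (fun k : ℕ => q ^ (k * (k - 1) / 2) * |x| ^ k) := by
  apply summable_of_ratio_norm_eventually_le (r := 1/2) (by norm_num)
  have h0 : Tendsto (fun k : ℕ => q ^ k * |x|) atTop (𝓝 0) := by
    simpa using (tendsto_pow_atTop_nhds_zero_of_lt_one hq0.le hq1).mul_const |x|
  filter_upwards [h0.eventually (gt_mem_nhds (by norm_num : (0:ℝ) < 1/2))] with k hk
  have hnn : (0:ℝ) ≤ q ^ (k * (k - 1) / 2) * |x| ^ k := by positivity
  rw [Real.norm_eq_abs, Real.norm_eq_abs, abs_of_nonneg (by positivity), abs_of_nonneg hnn,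
    Nat.add_sub_cancel]
  have he : q ^ ((k + 1) * k / 2) * |x| ^ (k + 1)
      = (q ^ k * |x|) * (q ^ (k * (k - 1) / 2) * |x| ^ k) := by
    rw [tri_succ, pow_add, pow_succ]
    ring
  rw [he]
  have : q ^ k * |x| ≤ 1 / 2 := le_of_lt hk
  exact mul_le_mul_of_nonneg_right this hnn

lemma summable_of_le_master (hq0 : 0 < q) (hq1 : q < 1) (x C : ℝ) (f : ℕ → ℝ)
    (h : ∀ k, |f k| ≤ C * (q ^ (k * (k - 1) / 2) * |x| ^ k)) : Summable f :=
  Summable.of_norm_bounded ((summable_master hq0 hq1 x).mul_left C) h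

end A

section C
variable {q : ℝ}

/-- Euler's function as a power series. -/
noncomputable def eulerF (q x : ℝ) : ℝ :=
  ∑' k : ℕ, (-1) ^ k * q ^ (k * (k - 1) / 2) * x ^ k / qPochR q q k

lemma eulerF_term_bound (hq0 : 0 < q) (hq1 : q < 1) (x : ℝ) (k : ℕ) :
    |(-1) ^ k * q ^ (k * (k - 1) / 2) * x ^ k / qPochR q q k|
      ≤ (qPochInfR q q)⁻¹ * (q ^ (k * (k - 1) / 2) * |x| ^ k) := by
  have hc := qPochInf_q_pos hq0 hq1
  have hP := qPochR_q_pos hq0 hq1 k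
  have hPc := qPochInf_le_qPochR hq0 hq1 k
  rw [abs_div, abs_of_pos hP]
  rw [show |(-1) ^ k * q ^ (k * (k - 1) / 2) * x ^ k| = q ^ (k * (k - 1) / 2) * |x| ^ k by
    simp [abs_mul, abs_pow, abs_of_pos hq0]]
  rw [div_eq_inv_mul]
  exact mul_le_mul_of_nonneg_right (inv_anti₀ hc hPc) (by positivity)

lemma summable_eulerF (hq0 : 0 < q) (hq1 : q < 1) (x : ℝ) :
    Summable (fun k : ℕ => (-1) ^ k * q ^ (k * (k - 1) / 2) * x ^ k / qPochR q q k) :=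
  summable_of_le_master hq0 hq1 x (qPochInfR q q)⁻¹ _ (eulerF_term_bound hq0 hq1 x)

lemma qPochR_succ (a : ℝ) (k : ℕ) :
    qPochR q a (k + 1) = qPochR q a k * (1 - a * q ^ k) := by
  rw [qPochR, Finset.prod_range_succ]; rfl

/-- one-step functional equation: `F(x) = (1-x) F(qx)`. -/
lemma eulerF_funeq (hq0 : 0 < q) (hq1 : q < 1) (x : ℝ) :
    eulerF q x = (1 - x) * eulerF q (q * x) := by
  set a : ℕ → ℝ := fun k => (-1) ^ k * q ^ (k * (k - 1) / 2) / qPochR q q k with ha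
  have hterm : ∀ y : ℝ, ∀ k : ℕ,
      (-1) ^ k * q ^ (k * (k - 1) / 2) * y ^ k / qPochR q q k = a k * y ^ k := by
    intro y k; rw [ha]; ring
  set b : ℕ → ℝ := fun k => Nat.rec 0 (fun k _ => x * (a k * (q * x) ^ k)) k with hb
  have hb0 : b 0 = 0 := rfl
  have hbs : ∀ k, b (k + 1) = x * (a k * (q * x) ^ k) := fun k => rfl
  have hS1 : Summable (fun k => a k * (q * x) ^ k) := by
    refine (summable_eulerF hq0 hq1 (q * x)).congr fun k => ?_
    rw [hterm]
  have hSb : Summable b := by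
    rw [← summable_nat_add_iff 1]
    refine (hS1.mul_left x).congr fun k => (hbs k).symm
  -- key pointwise identity
  have hkey : ∀ k : ℕ, a k * x ^ k = a k * (q * x) ^ k - b k := by
    intro k
    cases k with
    | zero => simp [hb0, ha]
    | succ k =>
      rw [hbs]
      have hP := qPochR_q_pos hq0 hq1 k
      have hPs := qPochR_q_pos hq0 hq1 (k + 1)
      have hPeq : qPochR q q (k + 1) = qPochR q q k * (1 - q * q ^ k) := qPochR_succ q (k+1-1)
      have hfac : (1 - q * q ^ k) ≠ 0 := ne_of_gt (factor_pos hq0 hq1 k)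
      have hexp : (k + 1) * (k + 1 - 1) / 2 = k * (k - 1) / 2 + k := by
        simpa using tri_succ k
      rw [ha]
      simp only []
      rw [hexp, hPeq]
      field_simp
      try ring
  calc eulerF q x = ∑' k, a k * x ^ k := by
        rw [eulerF]; exact tsum_congr (hterm x)
    _ = ∑' k, (a k * (q * x) ^ k - b k) := tsum_congr hkey
    _ = (∑' k, a k * (q * x) ^ k) - ∑' k, b k := Summable.tsum_sub hS1 hSb
    _ = (∑' k, a k * (q * x) ^ k) - x * ∑' k, a k * (q * x) ^ k := by
        congr 1
        rw [Summable.tsum_eq_zero_add hSb, hb0, zero_add, ← tsum_mul_left]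
    _ = (1 - x) * eulerF q (q * x) := by
        rw [eulerF]
        rw [show (∑' k : ℕ, (-1) ^ k * q ^ (k * (k - 1) / 2) * (q * x) ^ k / qPochR q q k)
            = ∑' k, a k * (q * x) ^ k from tsum_congr (hterm (q * x))]
        ring

lemma eulerF_iter (hq0 : 0 < q) (hq1 : q < 1) (x : ℝ) (n : ℕ) :
    eulerF q x = qPochR q x n * eulerF q (q ^ n * x) := by
  induction n with
  | zero => simp [qPochR]
  | succ n ih =>
    rw [ih, eulerF_funeq hq0 hq1 (q ^ n * x), qPochR_succ, mul_assoc]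
    congr 2
    · ring
    · congr 1; ring

lemma eulerF_one (hq0 : 0 < q) (hq1 : q < 1) : eulerF q 1 = 0 := by
  have h := eulerF_iter hq0 hq1 1 1
  rw [qPochR_succ, qPochR] at h
  simpa using h

lemma eulerF_qpow_inv (hq0 : 0 < q) (hq1 : q < 1) (m : ℕ) :
    eulerF q ((q ^ (m + 1))⁻¹) = 0 := by
  have h := eulerF_iter hq0 hq1 ((q ^ (m + 1))⁻¹) (m + 2)
  have hz : qPochR q ((q ^ (m + 1))⁻¹) (m + 2) = 0 := by
    rw [qPochR]
    apply Finset.prod_eq_zero (Finset.mem_range.2 (by omega : m + 1 < m + 2))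
    rw [inv_mul_cancel₀ (by positivity)]
    ring
  rw [h, hz, zero_mul]

lemma eulerF_tendsto_one (hq0 : 0 < q) (hq1 : q < 1) :
    Tendsto (fun n : ℕ => eulerF q (q ^ (n + 1))) atTop (𝓝 1) := by
  set D : ℝ := (qPochInfR q q)⁻¹ * ∑' k : ℕ, q ^ ((k + 1) * k / 2) with hD
  have hc := qPochInf_q_pos hq0 hq1
  have hmaster : Summable (fun k : ℕ => q ^ ((k + 1) * k / 2)) := by
    refine (summable_master hq0 hq1 q).congr fun k => ?_
    rw [tri_succ, pow_add, abs_of_pos hq0]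
  have hbound : ∀ n : ℕ, |eulerF q (q ^ (n + 1)) - 1| ≤ D * q ^ (n + 1) := by
    intro n
    set y : ℝ := q ^ (n + 1) with hy
    have hy0 : 0 < y := pow_pos hq0 _
    have hy1 : y ≤ 1 := pow_le_one₀ hq0.le hq1.le
    have hSy : Summable (fun k : ℕ => (-1) ^ k * q ^ (k * (k - 1) / 2) * y ^ k / qPochR q q k) :=
      summable_eulerF hq0 hq1 y
    have h0 : eulerF q y - 1
        = ∑' k : ℕ, (-1) ^ (k+1) * q ^ ((k+1) * (k+1-1) / 2) * y ^ (k+1) / qPochR q q (k+1) := by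
      rw [eulerF, Summable.tsum_eq_zero_add hSy]
      simp [qPochR]
    rw [h0]
    have hterm : ∀ k : ℕ,
        |(-1) ^ (k+1) * q ^ ((k+1) * (k+1-1) / 2) * y ^ (k+1) / qPochR q q (k+1)|
          ≤ ((qPochInfR q q)⁻¹ * q ^ ((k + 1) * k / 2)) * y := by
      intro k
      have h1 := eulerF_term_bound hq0 hq1 y (k + 1)
      have h2 : |y| ^ (k+1) ≤ y := by
        rw [abs_of_pos hy0]
        calc y ^ (k + 1) ≤ y ^ 1 := pow_le_pow_of_le_one hy0.le hy1 (by omega)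
          _ = y := pow_one y
      calc |(-1) ^ (k+1) * q ^ ((k+1) * (k+1-1) / 2) * y ^ (k+1) / qPochR q q (k+1)|
          ≤ (qPochInfR q q)⁻¹ * (q ^ ((k+1) * (k+1-1) / 2) * |y| ^ (k+1)) := h1
        _ ≤ (qPochInfR q q)⁻¹ * (q ^ ((k+1) * (k+1-1) / 2) * y) := by
            apply mul_le_mul_of_nonneg_left _ (by positivity)
            exact mul_le_mul_of_nonneg_left h2 (by positivity)
        _ = ((qPochInfR q q)⁻¹ * q ^ ((k + 1) * k / 2)) * y := by
            rw [Nat.add_sub_cancel]; ring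
    have hSb : Summable (fun k : ℕ => ((qPochInfR q q)⁻¹ * q ^ ((k + 1) * k / 2)) * y) :=
      ((hmaster.mul_left _).mul_right _)
    calc |∑' k : ℕ, (-1) ^ (k+1) * q ^ ((k+1) * (k+1-1) / 2) * y ^ (k+1) / qPochR q q (k+1)|
        ≤ ∑' k : ℕ, ((qPochInfR q q)⁻¹ * q ^ ((k + 1) * k / 2)) * y := by
          have hT : Summable (fun k : ℕ =>
              ‖(-1) ^ (k+1) * q ^ ((k+1) * (k+1-1) / 2) * y ^ (k+1) / qPochR q q (k+1)‖) :=
            Summable.of_norm_bounded hSb (fun k => by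
              rw [norm_norm, Real.norm_eq_abs]; exact hterm k)
          rw [← Real.norm_eq_abs]
          refine (norm_tsum_le_tsum_norm hT).trans
            (Summable.tsum_le_tsum (fun k => by rw [Real.norm_eq_abs]; exact hterm k) hT hSb)
      _ = D * y := by rw [hD, tsum_mul_right, tsum_mul_left]
  have hDq : Tendsto (fun n : ℕ => D * q ^ (n + 1)) atTop (𝓝 0) := by
    have := (tendsto_pow_atTop_nhds_zero_of_lt_one hq0.le hq1).const_mul D
    rw [mul_zero] at this
    exact this.comp (tendsto_add_atTop_nat 1)
  have hz : Tendsto (fun n : ℕ => eulerF q (q ^ (n + 1)) - 1) atTop (𝓝 0) :=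
    squeeze_zero_norm hbound hDq
  have := hz.add_const 1
  simpa using this

lemma eulerF_q (hq0 : 0 < q) (hq1 : q < 1) : eulerF q q = qPochInfR q q := by
  have h1 : Tendsto (fun n : ℕ => qPochR q q n * eulerF q (q ^ n * q)) atTop
      (𝓝 (qPochInfR q q * 1)) := by
    apply (tendsto_qPochR hq0 hq1).mul
    refine (eulerF_tendsto_one hq0 hq1).congr fun n => ?_
    rw [pow_succ]
  have h2 : ∀ n : ℕ, qPochR q q n * eulerF q (q ^ n * q) = eulerF q q :=
    fun n => (eulerF_iter hq0 hq1 q n).symm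
  have h3 : Tendsto (fun _ : ℕ => eulerF q q) atTop (𝓝 (qPochInfR q q * 1)) := by
    refine h1.congr fun n => h2 n
  rw [mul_one] at h3
  exact tendsto_nhds_unique tendsto_const_nhds h3

end C

section D
variable {q : ℝ}

lemma wSW_nonneg (q x : ℝ) : 0 ≤ wSW q x := by
  unfold wSW; positivity

lemma integrand_eq (hq0 : 0 < q) (hq1 : q < 1) (m : ℕ) (t : ℝ) :
    Real.exp t * ((Real.exp t)⁻¹ ^ m * wSW q (Real.exp t))
      = (Real.sqrt (-1 / (2 * Real.pi * Real.log q)) * Real.exp (Real.log q / 2 * (1 - m) * m))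
        * Real.exp (-(-1 / (2 * Real.log q)) *
            (t + ((1 - m) * Real.log q - Real.log q / 2)) ^ 2) := by
  set L : ℝ := Real.log q with hLdef
  have hL : L < 0 := Real.log_neg hq0 hq1
  have hLne : L ≠ 0 := ne_of_lt hL
  have hlog : Real.log (Real.exp t / Real.sqrt q) = t - L / 2 := by
    rw [Real.log_div (Real.exp_ne_zero t) (ne_of_gt (Real.sqrt_pos.2 hq0)), Real.log_exp,
      Real.log_sqrt hq0.le]
  have hinv : (Real.exp t)⁻¹ ^ m = Real.exp ((m : ℝ) * (-t)) := by
    rw [← Real.exp_neg, ← Real.exp_nat_mul]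
  rw [wSW, hlog, hinv]
  have hexp : t + (m : ℝ) * (-t) + 1 / (2 * L) * (t - L / 2) ^ 2
      = L / 2 * (1 - (m : ℝ)) * (m : ℝ)
        + -(-1 / (2 * L)) * (t + ((1 - (m : ℝ)) * L - L / 2)) ^ 2 := by
    field_simp
    ring
  calc Real.exp t * (Real.exp ((m : ℝ) * (-t)) *
        (Real.sqrt (-1 / (2 * Real.pi * L)) * Real.exp (1 / (2 * L) * (t - L / 2) ^ 2)))
      = Real.sqrt (-1 / (2 * Real.pi * L))
        * Real.exp (t + (m : ℝ) * (-t) + 1 / (2 * L) * (t - L / 2) ^ 2) := by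
        rw [Real.exp_add, Real.exp_add]; ring
    _ = Real.sqrt (-1 / (2 * Real.pi * L))
        * Real.exp (L / 2 * (1 - (m : ℝ)) * (m : ℝ)
            + -(-1 / (2 * L)) * (t + ((1 - (m : ℝ)) * L - L / 2)) ^ 2) := by rw [hexp]
    _ = _ := by rw [Real.exp_add]; ring

lemma integrable_gauss_shift {b : ℝ} (hb : 0 < b) (A : ℝ) :
    Integrable (fun t : ℝ => Real.exp (-b * (t + A) ^ 2)) := by
  have h := integrable_exp_neg_mul_sq hb
  have := (measurePreserving_add_right (volume : Measure ℝ) A).integrable_comp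
    h.aestronglyMeasurable
  exact this.2 h

lemma integral_gauss_shift {b : ℝ} (hb : 0 < b) (A : ℝ) :
    ∫ t : ℝ, Real.exp (-b * (t + A) ^ 2) = Real.sqrt (π / b) := by
  rw [show (fun t : ℝ => Real.exp (-b * (t + A) ^ 2))
      = fun t : ℝ => (fun x : ℝ => Real.exp (-b * x ^ 2)) (t + A) from rfl]
  rw [integral_add_right_eq_self (fun x : ℝ => Real.exp (-b * x ^ 2)) A]
  exact integral_gaussian b

lemma sqrt_const_mul (hq0 : 0 < q) (hq1 : q < 1) :
    Real.sqrt (-1 / (2 * Real.pi * Real.log q)) * Real.sqrt (π / (-1 / (2 * Real.log q))) = 1 := by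
  have hL : Real.log q < 0 := Real.log_neg hq0 hq1
  have hLne : Real.log q ≠ 0 := ne_of_lt hL
  have hd : 2 * Real.pi * Real.log q < 0 := by nlinarith [Real.pi_pos]
  have h1 : (0:ℝ) ≤ -1 / (2 * Real.pi * Real.log q) :=
    le_of_lt (div_pos_of_neg_of_neg (by norm_num) hd)
  rw [← Real.sqrt_mul h1]
  rw [show -1 / (2 * Real.pi * Real.log q) * (π / (-1 / (2 * Real.log q)))
      = (π * π⁻¹) * (Real.log q * (Real.log q)⁻¹) by field_simp]
  rw [mul_inv_cancel₀ Real.pi_ne_zero, mul_inv_cancel₀ hLne, one_mul]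
  exact Real.sqrt_one

lemma exp_K_eq (hq0 : 0 < q) (hq1 : q < 1) (m : ℕ) :
    Real.exp (Real.log q / 2 * (1 - m) * m) = (q ^ (m * (m - 1) / 2))⁻¹ := by
  have h2 : 2 * (m * (m - 1) / 2) = m * (m - 1) := by
    apply Nat.mul_div_cancel'
    have hev : Even (m * (m - 1)) := by
      cases m with
      | zero => simp
      | succ n => simpa [Nat.succ_sub_one, mul_comm] using Nat.even_mul_succ_self n
    exact hev.two_dvd
  have hcast : 2 * ((m * (m - 1) / 2 : ℕ) : ℝ) = (m : ℝ) * ((m : ℝ) - 1) := by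
    have := congrArg (fun n : ℕ => (n : ℝ)) h2
    push_cast at this
    rcases Nat.eq_zero_or_pos m with rfl | hm
    · simpa using this
    · rw [Nat.cast_sub hm] at this
      push_cast at this
      linarith
  have hKeq : Real.log q / 2 * (1 - m) * m = -(((m * (m - 1) / 2 : ℕ) : ℝ) * Real.log q) := by
    have hN : ((m * (m - 1) / 2 : ℕ) : ℝ) = (m : ℝ) * ((m : ℝ) - 1) / 2 := by linarith
    rw [hN]; ring
  rw [hKeq, Real.exp_neg, Real.exp_nat_mul, Real.exp_log hq0]

lemma ioi_eq_image : Set.Ioi (0:ℝ) = Real.exp '' Set.univ := by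
  rw [Set.image_univ, Real.range_exp]

lemma integral_mom (hq0 : 0 < q) (hq1 : q < 1) (m : ℕ) :
    ∫ u in Set.Ioi (0:ℝ), (u⁻¹) ^ m * wSW q u = (q ^ (m * (m - 1) / 2))⁻¹ := by
  have hL : Real.log q < 0 := Real.log_neg hq0 hq1
  have hb : 0 < -1 / (2 * Real.log q) := by
    apply div_pos_of_neg_of_neg (by norm_num); linarith
  rw [ioi_eq_image,
    integral_image_eq_integral_abs_deriv_smul MeasurableSet.univ
      (fun x _ => (Real.hasDerivAt_exp x).hasDerivWithinAt) Real.exp_injective.injOn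
      (fun u => (u⁻¹) ^ m * wSW q u)]
  rw [Measure.restrict_univ]
  have heq : ∀ t : ℝ, |Real.exp t| • ((Real.exp t)⁻¹ ^ m * wSW q (Real.exp t))
      = (Real.sqrt (-1 / (2 * Real.pi * Real.log q)) * Real.exp (Real.log q / 2 * (1 - m) * m))
        * Real.exp (-(-1 / (2 * Real.log q)) *
            (t + ((1 - m) * Real.log q - Real.log q / 2)) ^ 2) := by
    intro t
    rw [smul_eq_mul, abs_of_pos (Real.exp_pos t)]
    exact integrand_eq hq0 hq1 m t
  rw [show (fun t : ℝ => |Real.exp t| • ((Real.exp t)⁻¹ ^ m * wSW q (Real.exp t)))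
      = fun t : ℝ => (Real.sqrt (-1 / (2 * Real.pi * Real.log q))
          * Real.exp (Real.log q / 2 * (1 - m) * m))
        * Real.exp (-(-1 / (2 * Real.log q)) *
            (t + ((1 - m) * Real.log q - Real.log q / 2)) ^ 2) from funext heq]
  rw [MeasureTheory.integral_const_mul, integral_gauss_shift hb]
  rw [show Real.sqrt (-1 / (2 * Real.pi * Real.log q)) * Real.exp (Real.log q / 2 * (1 - m) * m)
      * Real.sqrt (π / (-1 / (2 * Real.log q)))
    = (Real.sqrt (-1 / (2 * Real.pi * Real.log q))
        * Real.sqrt (π / (-1 / (2 * Real.log q)))) * Real.exp (Real.log q / 2 * (1 - m) * m)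
      by ring]
  rw [sqrt_const_mul hq0 hq1, one_mul, exp_K_eq hq0 hq1 m]

lemma integrableOn_mom (hq0 : 0 < q) (hq1 : q < 1) (m : ℕ) :
    IntegrableOn (fun u => (u⁻¹) ^ m * wSW q u) (Set.Ioi (0:ℝ)) := by
  have hL : Real.log q < 0 := Real.log_neg hq0 hq1
  have hb : 0 < -1 / (2 * Real.log q) := by
    apply div_pos_of_neg_of_neg (by norm_num); linarith
  rw [ioi_eq_image,
    integrableOn_image_iff_integrableOn_abs_deriv_smul MeasurableSet.univ
      (fun x _ => (Real.hasDerivAt_exp x).hasDerivWithinAt) Real.exp_injective.injOn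
      (fun u => (u⁻¹) ^ m * wSW q u)]
  rw [IntegrableOn, Measure.restrict_univ]
  have h := (integrable_gauss_shift hb ((1 - m) * Real.log q - Real.log q / 2)).const_mul
    (Real.sqrt (-1 / (2 * Real.pi * Real.log q)) * Real.exp (Real.log q / 2 * (1 - m) * m))
  refine h.congr (Filter.Eventually.of_forall fun t => ?_)
  simp only [smul_eq_mul, Real.abs_exp]
  exact (integrand_eq hq0 hq1 m t).symm

end D

section E
variable {q : ℝ}

lemma nat_two_mul_half (m : ℕ) : 2 * (m * (m - 1) / 2) = m * (m - 1) := by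
  apply Nat.mul_div_cancel'
  have hev : Even (m * (m - 1)) := by
    cases m with
    | zero => simp
    | succ n => simpa [Nat.succ_sub_one, mul_comm] using Nat.even_mul_succ_self n
  exact hev.two_dvd

lemma mul_pred_eq (m : ℕ) : m * (m - 1) = m * m - m := by
  cases m with
  | zero => simp
  | succ n =>
    simp only [Nat.succ_sub_one]
    rw [Nat.mul_succ]
    exact (Nat.add_sub_cancel _ _).symm

lemma self_le_mul_self (m : ℕ) : m ≤ m * m := by
  cases m with
  | zero => simp
  | succ n => exact Nat.le_mul_of_pos_left _ (Nat.succ_pos n)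

lemma nat_two_mul_le (k l : ℕ) : 2 * (k * l) ≤ k * k + l * l := by
  zify
  nlinarith [sq_nonneg ((k : ℤ) - (l : ℤ))]

lemma exp_identity (k l : ℕ) :
    k * k + l * l + k * l
      = l * (l + 1) / 2 + k * (k - 1) / 2 + k + (k + l) * (k + l - 1) / 2 := by
  have hA := nat_two_mul_half k
  have hC := nat_two_mul_half (k + l)
  have hB := nat_two_mul_half (l + 1)
  simp only [Nat.add_sub_cancel] at hB
  rw [show l * (l + 1) / 2 = (l + 1) * l / 2 by rw [Nat.mul_comm]]
  have h1 : k * (k - 1) = k * k - k := mul_pred_eq k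
  have h2 : (k + l) * (k + l - 1) = (k + l) * (k + l) - (k + l) := mul_pred_eq (k + l)
  have h3 : (l + 1) * l = l * l + l := by ring
  have h4 : (k + l) * (k + l) = k * k + (k * l + k * l) + l * l := by ring
  have h5 : k ≤ k * k := self_le_mul_self k
  have h6 : k + l ≤ k * k + (k * l + k * l) + l * l := h4 ▸ self_le_mul_self (k + l)
  have hA' : 2 * (k * (k - 1) / 2) = k * k - k := by rw [hA, h1]
  have hB' : 2 * ((l + 1) * l / 2) = l * l + l := by rw [hB, h3]
  have hC' : 2 * ((k + l) * (k + l - 1) / 2) = (k * k + (k * l + k * l) + l * l) - (k + l) := by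
    rw [hC, h2, h4]
  clear hA hB hC h1 h2 h3 h4
  generalize k * (k - 1) / 2 = A at hA' ⊢
  generalize (l + 1) * l / 2 = B at hB' ⊢
  generalize (k + l) * (k + l - 1) / 2 = C at hC' ⊢
  generalize k * k = K at hA' hC' h5 h6 ⊢
  generalize l * l = L2 at hB' hC' h6 ⊢
  generalize k * l = M at hC' h6 ⊢
  omega

lemma nat_exp_le (k l : ℕ) :
    k + l + 2 * ((k + l) * (k + l - 1) / 2) ≤ 2 * (k * k + l * l) := by
  have hC := nat_two_mul_half (k + l)
  have h2 : (k + l) * (k + l - 1) = (k + l) * (k + l) - (k + l) := mul_pred_eq (k + l)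
  have h4 : (k + l) * (k + l) = k * k + (k * l + k * l) + l * l := by ring
  have h6 : k + l ≤ k * k + (k * l + k * l) + l * l := h4 ▸ self_le_mul_self (k + l)
  have h7 : 2 * (k * l) ≤ k * k + l * l := nat_two_mul_le k l
  have hC' : 2 * ((k + l) * (k + l - 1) / 2) = (k * k + (k * l + k * l) + l * l) - (k + l) := by
    rw [hC, h2, h4]
  generalize (k + l) * (k + l - 1) / 2 = C at hC' ⊢
  generalize k * k = K at hC' h6 h7 ⊢
  generalize l * l = L2 at hC' h6 h7 ⊢
  generalize k * l = M at hC' h6 h7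
  omega

/-- coefficient of the double series -/
noncomputable def cks (q : ℝ) (p : ℕ × ℕ) : ℝ :=
  ((-1) ^ p.1 * q ^ (p.1 ^ 2) / qPochR q q p.1) * ((-1) ^ p.2 * q ^ (p.2 ^ 2) / qPochR q q p.2)

lemma abs_cks (hq0 : 0 < q) (hq1 : q < 1) (p : ℕ × ℕ) :
    |cks q p| = q ^ (p.1 ^ 2) * q ^ (p.2 ^ 2) / (qPochR q q p.1 * qPochR q q p.2) := by
  have h1 := qPochR_q_pos hq0 hq1 p.1
  have h2 := qPochR_q_pos hq0 hq1 p.2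
  rw [cks]
  simp only [abs_mul, abs_div, abs_pow, abs_neg, abs_one, one_pow, one_mul,
    abs_of_pos hq0, abs_of_pos h1, abs_of_pos h2]
  rw [div_mul_div_comm]

lemma cks_mom_bound (hq0 : 0 < q) (hq1 : q < 1) (p : ℕ × ℕ) :
    |cks q p| * (q ^ ((p.1 + p.2) * (p.1 + p.2 - 1) / 2))⁻¹
      ≤ ((qPochInfR q q)⁻¹ * (qPochInfR q q)⁻¹)
        * (Real.sqrt q ^ p.1 * Real.sqrt q ^ p.2) := by
  obtain ⟨k, l⟩ := p
  have hc := qPochInf_q_pos hq0 hq1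
  have hPk := qPochR_q_pos hq0 hq1 k
  have hPl := qPochR_q_pos hq0 hq1 l
  have hck := qPochInf_le_qPochR hq0 hq1 k
  have hcl := qPochInf_le_qPochR hq0 hq1 l
  have hr0 : 0 ≤ Real.sqrt q := Real.sqrt_nonneg q
  have hr2 : Real.sqrt q ^ 2 = q := Real.sq_sqrt hq0.le
  rw [abs_cks hq0 hq1]
  have hMom : (0:ℝ) < (q ^ ((k + l) * (k + l - 1) / 2))⁻¹ := by positivity
  -- core power inequality
  have hcore : q ^ (k ^ 2) * q ^ (l ^ 2) * (q ^ ((k + l) * (k + l - 1) / 2))⁻¹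
      ≤ Real.sqrt q ^ k * Real.sqrt q ^ l := by
    have hq' : (0:ℝ) < q ^ ((k + l) * (k + l - 1) / 2) := by positivity
    rw [mul_inv_le_iff₀ hq']
    have lhs_eq : Real.sqrt q ^ (2 * (k * k + l * l)) = q ^ (k ^ 2) * q ^ (l ^ 2) := by
      rw [pow_mul, hr2, show k * k + l * l = k ^ 2 + l ^ 2 by rw [pow_two, pow_two], pow_add]
    have rhs_eq : Real.sqrt q ^ (k + l + 2 * ((k + l) * (k + l - 1) / 2))
        = Real.sqrt q ^ k * Real.sqrt q ^ l * q ^ ((k + l) * (k + l - 1) / 2) := by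
      rw [pow_add, pow_add, pow_mul, hr2]
    rw [← lhs_eq, ← rhs_eq]
    apply pow_le_pow_of_le_one hr0
    · nlinarith [Real.sq_sqrt hq0.le, Real.sqrt_nonneg q, hq1]
    · exact nat_exp_le k l
  calc q ^ (k ^ 2) * q ^ (l ^ 2) / (qPochR q q k * qPochR q q l)
        * (q ^ ((k + l) * (k + l - 1) / 2))⁻¹
      ≤ q ^ (k ^ 2) * q ^ (l ^ 2) / (qPochInfR q q * qPochInfR q q)
        * (q ^ ((k + l) * (k + l - 1) / 2))⁻¹ := by
        apply mul_le_mul_of_nonneg_right _ hMom.le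
        apply div_le_div_of_nonneg_left (by positivity) (by positivity)
        exact mul_le_mul hck hcl hc.le hPk.le
    _ = ((qPochInfR q q)⁻¹ * (qPochInfR q q)⁻¹)
        * (q ^ (k ^ 2) * q ^ (l ^ 2) * (q ^ ((k + l) * (k + l - 1) / 2))⁻¹) := by
        field_simp
    _ ≤ ((qPochInfR q q)⁻¹ * (qPochInfR q q)⁻¹)
        * (Real.sqrt q ^ k * Real.sqrt q ^ l) := by
        apply mul_le_mul_of_nonneg_left hcore (by positivity)

lemma sqrt_q_lt_one (hq0 : 0 < q) (hq1 : q < 1) : Real.sqrt q < 1 := by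
  nlinarith [Real.sq_sqrt hq0.le, Real.sqrt_nonneg q]

lemma summable_geom_prod (hq0 : 0 < q) (hq1 : q < 1) :
    Summable (fun p : ℕ × ℕ => Real.sqrt q ^ p.1 * Real.sqrt q ^ p.2) := by
  have hg : Summable (fun k : ℕ => ‖Real.sqrt q ^ k‖) := by
    refine (summable_geometric_of_lt_one (Real.sqrt_nonneg q)
      (sqrt_q_lt_one hq0 hq1)).congr fun k => ?_
    rw [Real.norm_eq_abs, abs_pow, abs_of_nonneg (Real.sqrt_nonneg q)]
  exact summable_mul_of_summable_norm hg hg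

lemma summable_T (hq0 : 0 < q) (hq1 : q < 1) :
    Summable (fun p : ℕ × ℕ => |cks q p| * (q ^ ((p.1 + p.2) * (p.1 + p.2 - 1) / 2))⁻¹) := by
  apply Summable.of_nonneg_of_le (fun p => by positivity) (cks_mom_bound hq0 hq1)
  exact (summable_geom_prod hq0 hq1).mul_left _

end E

section F
variable {q : ℝ}

lemma term_eq (hq0 : 0 < q) (hq1 : q < 1) (k l : ℕ) :
    cks q (k, l) * (q ^ ((k + l) * (k + l - 1) / 2))⁻¹
      = ((-1) ^ l * q ^ (l * (l + 1) / 2) / qPochR q q l)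
        * ((-1) ^ k * q ^ (k * (k - 1) / 2) * (q * (q ^ l)⁻¹) ^ k / qPochR q q k) := by
  have hPk := (qPochR_q_pos hq0 hq1 k).ne'
  have hPl := (qPochR_q_pos hq0 hq1 l).ne'
  have hqne : q ≠ 0 := hq0.ne'
  have hcore : q ^ (k ^ 2) * q ^ (l ^ 2) * q ^ (k * l)
      = q ^ (l * (l + 1) / 2) * q ^ (k * (k - 1) / 2) * q ^ k
        * q ^ ((k + l) * (k + l - 1) / 2) := by
    rw [← pow_add, ← pow_add, ← pow_add, ← pow_add, ← pow_add]
    congr 1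
    rw [pow_two, pow_two]
    exact exp_identity k l
  have hsplit : (q * (q ^ l)⁻¹) ^ k = q ^ k * (q ^ (l * k))⁻¹ := by
    rw [mul_pow, inv_pow, ← pow_mul]
  rw [cks, hsplit]
  field_simp
  rw [show l * k = k * l from Nat.mul_comm l k]
  linear_combination hcore

lemma raman_eq (x : ℝ) : ramanujanAqR q x
    = ∑' k : ℕ, ((-1) ^ k * q ^ (k ^ 2) / qPochR q q k) * x ^ k := by
  rw [ramanujanAqR]
  exact tsum_congr fun k => by rw [neg_pow]; ring

lemma aterm_bound (hq0 : 0 < q) (hq1 : q < 1) (x : ℝ) (k : ℕ) :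
    |((-1) ^ k * q ^ (k ^ 2) / qPochR q q k) * x ^ k|
      ≤ (qPochInfR q q)⁻¹ * (q ^ (k * (k - 1) / 2) * |x| ^ k) := by
  have hc := qPochInf_q_pos hq0 hq1
  have hP := qPochR_q_pos hq0 hq1 k
  have hPc := qPochInf_le_qPochR hq0 hq1 k
  have habs : |((-1) ^ k * q ^ (k ^ 2) / qPochR q q k) * x ^ k|
      = q ^ (k ^ 2) * |x| ^ k / qPochR q q k := by
    simp only [abs_mul, abs_div, abs_pow, abs_neg, abs_one, one_pow, one_mul,
      abs_of_pos hq0, abs_of_pos hP]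
    ring
  rw [habs]
  have hexp : q ^ (k ^ 2) ≤ q ^ (k * (k - 1) / 2) := by
    apply pow_le_pow_of_le_one hq0.le hq1.le
    calc k * (k - 1) / 2 ≤ k * k / 2 := by
          apply Nat.div_le_div_right
          exact Nat.mul_le_mul_left k (Nat.sub_le k 1)
      _ ≤ k * k := Nat.div_le_self _ _
      _ = k ^ 2 := (pow_two k).symm
  calc q ^ (k ^ 2) * |x| ^ k / qPochR q q k
      ≤ q ^ (k ^ 2) * |x| ^ k / qPochInfR q q := by
        apply div_le_div_of_nonneg_left (by positivity) hc hPc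
    _ = (qPochInfR q q)⁻¹ * (q ^ (k ^ 2) * |x| ^ k) := by ring
    _ ≤ (qPochInfR q q)⁻¹ * (q ^ (k * (k - 1) / 2) * |x| ^ k) := by
        apply mul_le_mul_of_nonneg_left _ (by positivity)
        exact mul_le_mul_of_nonneg_right hexp (by positivity)

lemma aterm_norm_summable (hq0 : 0 < q) (hq1 : q < 1) (x : ℝ) :
    Summable (fun k : ℕ => ‖((-1) ^ k * q ^ (k ^ 2) / qPochR q q k) * x ^ k‖) := by
  apply summable_of_le_master hq0 hq1 x (qPochInfR q q)⁻¹
  intro k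
  rw [Real.norm_eq_abs, abs_abs]
  exact aterm_bound hq0 hq1 x k

lemma pointwise_expansion (hq0 : 0 < q) (hq1 : q < 1) (u : ℝ) :
    ramanujanAqR q u⁻¹ ^ 2 * wSW q u
      = ∑' p : ℕ × ℕ, cks q p * ((u⁻¹) ^ (p.1 + p.2) * wSW q u) := by
  rw [sq, raman_eq,
    tsum_mul_tsum_of_summable_norm (aterm_norm_summable hq0 hq1 u⁻¹)
      (aterm_norm_summable hq0 hq1 u⁻¹), ← tsum_mul_right]
  exact tsum_congr fun p => by rw [cks, pow_add]; ring

lemma integral_norm_term (hq0 : 0 < q) (hq1 : q < 1) (p : ℕ × ℕ) :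
    ∫ u in Set.Ioi (0:ℝ), ‖cks q p * ((u⁻¹) ^ (p.1 + p.2) * wSW q u)‖
      = |cks q p| * (q ^ ((p.1 + p.2) * (p.1 + p.2 - 1) / 2))⁻¹ := by
  have heq : ∀ u ∈ Set.Ioi (0:ℝ), ‖cks q p * ((u⁻¹) ^ (p.1 + p.2) * wSW q u)‖
      = |cks q p| * ((u⁻¹) ^ (p.1 + p.2) * wSW q u) := by
    intro u hu
    rw [Real.norm_eq_abs, abs_mul]
    congr 1
    apply abs_of_nonneg
    have hu' : (0:ℝ) < u := hu
    have hw := wSW_nonneg q u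
    positivity
  rw [setIntegral_congr_fun measurableSet_Ioi heq, MeasureTheory.integral_const_mul,
    integral_mom hq0 hq1]

lemma integral_term (hq0 : 0 < q) (hq1 : q < 1) (p : ℕ × ℕ) :
    ∫ u in Set.Ioi (0:ℝ), cks q p * ((u⁻¹) ^ (p.1 + p.2) * wSW q u)
      = cks q p * (q ^ ((p.1 + p.2) * (p.1 + p.2 - 1) / 2))⁻¹ := by
  rw [MeasureTheory.integral_const_mul, integral_mom hq0 hq1]

end F

/-- For `0 < q < 1`, `∫₀^∞ A_q(u⁻¹)² w_SW(u;q) du = (q;q)_∞`. -/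
theorem integral_ramanujanAq_sq_SW (q : ℝ) (hq0 : 0 < q) (hq1 : q < 1) :
    ∫ u in Set.Ioi (0 : ℝ), ramanujanAqR q u⁻¹ ^ 2 * wSW q u = qPochInfR q q := by
  have hfun : (fun u : ℝ => ramanujanAqR q u⁻¹ ^ 2 * wSW q u)
      = fun u => ∑' p : ℕ × ℕ, cks q p * ((u⁻¹) ^ (p.1 + p.2) * wSW q u) :=
    funext (pointwise_expansion hq0 hq1)
  have hint : ∀ p : ℕ × ℕ, Integrable (fun u => cks q p * ((u⁻¹) ^ (p.1 + p.2) * wSW q u))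
      (volume.restrict (Set.Ioi (0:ℝ))) :=
    fun p => ((integrableOn_mom hq0 hq1 (p.1 + p.2)).const_mul (cks q p))
  have hsum : Summable (fun p : ℕ × ℕ =>
      ∫ u in Set.Ioi (0:ℝ), ‖cks q p * ((u⁻¹) ^ (p.1 + p.2) * wSW q u)‖) := by
    refine (summable_T hq0 hq1).congr fun p => ?_
    exact (integral_norm_term hq0 hq1 p).symm
  have hTsum : Summable (fun p : ℕ × ℕ =>
      cks q p * (q ^ ((p.1 + p.2) * (p.1 + p.2 - 1) / 2))⁻¹) := by
    apply Summable.of_norm_bounded (summable_T hq0 hq1)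
    intro p
    rw [Real.norm_eq_abs, abs_mul,
      abs_of_pos (by positivity : (0:ℝ) < (q ^ ((p.1 + p.2) * (p.1 + p.2 - 1) / 2))⁻¹)]
  have hsum2 : Summable (fun p : ℕ × ℕ =>
      cks q (p.2, p.1) * (q ^ ((p.2 + p.1) * (p.2 + p.1 - 1) / 2))⁻¹) :=
    (Equiv.prodComm ℕ ℕ).summable_iff.2 hTsum
  have hslice : ∀ l : ℕ, Summable (fun k : ℕ =>
      cks q (k, l) * (q ^ ((k + l) * (k + l - 1) / 2))⁻¹) := by
    intro l
    have hi : Function.Injective (fun k : ℕ => ((k, l) : ℕ × ℕ)) := by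
      intro a b h
      simpa using congrArg Prod.fst h
    exact hTsum.comp_injective hi
  have hinner : ∀ l : ℕ, (∑' k : ℕ, cks q (k, l) * (q ^ ((k + l) * (k + l - 1) / 2))⁻¹)
      = ((-1) ^ l * q ^ (l * (l + 1) / 2) / qPochR q q l) * eulerF q (q * (q ^ l)⁻¹) := by
    intro l
    rw [show (∑' k : ℕ, cks q (k, l) * (q ^ ((k + l) * (k + l - 1) / 2))⁻¹)
        = ∑' k : ℕ, ((-1) ^ l * q ^ (l * (l + 1) / 2) / qPochR q q l)
            * ((-1) ^ k * q ^ (k * (k - 1) / 2) * (q * (q ^ l)⁻¹) ^ k / qPochR q q k)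
      from tsum_congr fun k => term_eq hq0 hq1 k l]
    rw [tsum_mul_left, eulerF]
  have hzero : ∀ l : ℕ, l ≠ 0 →
      ((-1) ^ l * q ^ (l * (l + 1) / 2) / qPochR q q l) * eulerF q (q * (q ^ l)⁻¹) = 0 := by
    intro l hl
    match l, hl with
    | 1, _ =>
      rw [show q * ((q : ℝ) ^ 1)⁻¹ = 1 by field_simp, eulerF_one hq0 hq1, mul_zero]
    | (m+2), _ =>
      rw [show q * ((q : ℝ) ^ (m + 2))⁻¹ = ((q : ℝ) ^ (m + 1))⁻¹ by
          field_simp; ring]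
      rw [eulerF_qpow_inv hq0 hq1 m, mul_zero]
  calc ∫ u in Set.Ioi (0 : ℝ), ramanujanAqR q u⁻¹ ^ 2 * wSW q u
      = ∫ u in Set.Ioi (0:ℝ), ∑' p : ℕ × ℕ, cks q p * ((u⁻¹) ^ (p.1 + p.2) * wSW q u) := by
        rw [hfun]
    _ = ∑' p : ℕ × ℕ, ∫ u in Set.Ioi (0:ℝ), cks q p * ((u⁻¹) ^ (p.1 + p.2) * wSW q u) :=
        (MeasureTheory.integral_tsum_of_summable_integral_norm hint hsum).symm
    _ = ∑' p : ℕ × ℕ, cks q p * (q ^ ((p.1 + p.2) * (p.1 + p.2 - 1) / 2))⁻¹ :=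
        tsum_congr (integral_term hq0 hq1)
    _ = ∑' p : ℕ × ℕ, cks q (p.2, p.1) * (q ^ ((p.2 + p.1) * (p.2 + p.1 - 1) / 2))⁻¹ :=
        ((Equiv.prodComm ℕ ℕ).tsum_eq
          (fun p : ℕ × ℕ => cks q p * (q ^ ((p.1 + p.2) * (p.1 + p.2 - 1) / 2))⁻¹)).symm
    _ = ∑' (l : ℕ) (k : ℕ), cks q (k, l) * (q ^ ((k + l) * (k + l - 1) / 2))⁻¹ :=
        Summable.tsum_prod' hsum2 hslice
    _ = ∑' l : ℕ, ((-1) ^ l * q ^ (l * (l + 1) / 2) / qPochR q q l)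
          * eulerF q (q * (q ^ l)⁻¹) := tsum_congr hinner
    _ = ((-1) ^ 0 * q ^ (0 * (0 + 1) / 2) / qPochR q q 0) * eulerF q (q * ((q : ℝ) ^ 0)⁻¹) :=
        tsum_eq_single 0 hzero
    _ = qPochInfR q q := by
        rw [show q * ((q : ℝ) ^ 0)⁻¹ = q by norm_num, eulerF_q hq0 hq1]
        rw [show qPochR q q 0 = 1 by rw [qPochR]; simp]
        norm_num
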